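/- Let $K$ be a field, $X$ the generic symmetric $n \times n$ matrix, and $g_1, \ldots, g_n$ the entries of $XY$ with $Y$ the generic column. For every $1 \le t \le n-1$, the ideal $\langle g_1, \ldots, g_t \rangle$ is prime in $R = K[x_{ij} (i \le j), y_j]$. -/

import Mathlib

open MvPolynomial Matrix Finset

section Setup

variable (K : Type*) [Field K] (n : ℕ)

/-- Variable type. -/
abbrev SymVars (n : ℕ) := {p : Fin n × Fin n // p.1 ≤ p.2} ⊕ Fin n

abbrev PolyA (K : Type*) [Field K] (n : ℕ) := MvPolynomial (SymVars n) K

variable {n} in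
def xvar (i j : Fin n) : SymVars n := Sum.inl ⟨(min i j, max i j), min_le_max⟩

variable {n} in
def yvar (k : Fin n) : SymVars n := Sum.inr k

/-- truncated row `i`, using columns `k < m`. -/
noncomputable def HH (m : ℕ) (i : Fin n) : PolyA K n :=
  ∑ k ∈ univ.filter (fun k : Fin n => (k : ℕ) < m), X (xvar i k) * X (yvar k)

noncomputable def HN (m i : ℕ) : PolyA K n :=
  if h : i < n then HH K n m ⟨i, h⟩ else 0

noncomputable def II (m t : ℕ) : Ideal (PolyA K n) :=
  Ideal.span (Set.range fun i : Fin t => HN K n m (i : ℕ))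

/-- only Koszul syzygies (with zero diagonal, for char 2). -/
def Kosz (m t : ℕ) : Prop :=
  ∀ a : Fin t → PolyA K n, ∑ i, a i * HN K n m (i : ℕ) = 0 →
    ∃ c : Fin t → Fin t → PolyA K n,
      (∀ i j, c i j = - c j i) ∧ (∀ i, c i i = 0) ∧
      ∀ i, a i = ∑ j, c i j * HN K n m (j : ℕ)

lemma mem_II_iff {m t : ℕ} {p : PolyA K n} :
    p ∈ II K n m t ↔ ∃ a : Fin t → PolyA K n, ∑ i, a i * HN K n m (i : ℕ) = p := by
  rw [II, Ideal.span, Submodule.mem_span_range_iff_exists_fun]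
  simp [smul_eq_mul]

lemma HN_of_lt {m i : ℕ} (h : i < n) : HN K n m i = HH K n m ⟨i, h⟩ := dif_pos h

lemma filter_lt_succ {m : ℕ} (hm : m < n) :
    univ.filter (fun k : Fin n => (k : ℕ) < m + 1) =
      insert ⟨m, hm⟩ (univ.filter (fun k : Fin n => (k : ℕ) < m)) := by
  ext k
  simp only [mem_filter, mem_univ, true_and, mem_insert, Fin.ext_iff]
  omega

lemma HN_succ {m i : ℕ} (hm : m < n) (hi : i < n) :
    HN K n (m + 1) i =
      HN K n m i + X (xvar ⟨i, hi⟩ ⟨m, hm⟩) * X (yvar ⟨m, hm⟩) := by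
  rw [HN_of_lt K n hi, HN_of_lt K n hi, HH, HH, filter_lt_succ (n := n) hm, Finset.sum_insert (by simp)]
  ring

/-- sums against antisymmetric (zero-diagonal) coefficients vanish. -/
lemma antisym_sum_zero {A : Type*} [CommRing A] {t : ℕ}
    (c : Fin t → Fin t → A) (h1 : ∀ i j, c i j = - c j i) (h0 : ∀ i, c i i = 0)
    (s : Fin t → A) : ∑ i, ∑ j, c i j * s (j : Fin t) * s i = 0 := by
  rw [← Finset.sum_product']
  apply Finset.sum_involution (fun p _ => (p.2, p.1))
  · intro p _
    rcases p with ⟨i, j⟩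
    simp only
    rw [h1 i j]
    ring
  · intro p _ hne
    rcases p with ⟨i, j⟩
    simp only [Prod.mk.injEq, ne_eq]
    rintro ⟨rfl, -⟩
    exact hne (by rw [h0]; ring)
  · intro p _; exact Finset.mem_product.2 ⟨Finset.mem_univ _, Finset.mem_univ _⟩
  · intro p _; rfl

/-- Taylor-style lemma: difference of two evaluations lies in the ideal
generated by differences of the variable values. -/
lemma eval₂_sub_eval₂_mem {S : Type*} [CommRing S] (φ : K →+* S)
    (v w : SymVars n → S) (p : PolyA K n) :
    eval₂ φ v p - eval₂ φ w p ∈ Ideal.span (Set.range fun s => v s - w s) := by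
  induction p using MvPolynomial.induction_on with
  | C a => simp
  | add p q hp hq =>
      rw [eval₂_add, eval₂_add]
      have : eval₂ φ v p + eval₂ φ v q - (eval₂ φ w p + eval₂ φ w q)
          = (eval₂ φ v p - eval₂ φ w p) + (eval₂ φ v q - eval₂ φ w q) := by ring
      rw [this]
      exact Ideal.add_mem _ hp hq
  | mul_X p s hp =>
      rw [eval₂_mul, eval₂_mul, eval₂_X, eval₂_X]
      have : eval₂ φ v p * v s - eval₂ φ w p * w s
          = eval₂ φ v p * (v s - w s) + (eval₂ φ v p - eval₂ φ w p) * w s := by ring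
      rw [this]
      exact Ideal.add_mem _
        (Ideal.mul_mem_left _ _ (Ideal.subset_span ⟨s, rfl⟩))
        (Ideal.mul_mem_right _ _ hp)

end Setup

section NotMem

variable {n : ℕ}

lemma xvar_ne_yvar (i j k : Fin n) : xvar i j ≠ yvar k := by
  simp [xvar, yvar]

lemma yvar_injj {a b : Fin n} (h : yvar a = yvar b) : a = b := by
  simpa [yvar] using h

lemma xvar_inj {i j i' j' : Fin n} (h1 : i ≤ j) (h2 : i' ≤ j')
    (h : xvar i j = xvar i' j') : i = i' ∧ j = j' := by
  simp only [xvar, Sum.inl.injEq, Subtype.mk.injEq, Prod.mk.injEq,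
    min_eq_left h1, min_eq_left h2, max_eq_right h1, max_eq_right h2] at h
  exact h

lemma mono_analysis {m t : ℕ}
    (hm1 : m - 1 < n) (htn : t < n)
    {i : ℕ} (hin : i < n) (α β : SymVars n →₀ ℕ) (k : Fin n)
    (hab : α + β = Finsupp.single (xvar ⟨t, htn⟩ ⟨m-1, hm1⟩) 1
        + Finsupp.single (yvar ⟨m-1, hm1⟩) 1)
    (hβ : β = Finsupp.single (xvar ⟨i, hin⟩ k) 1 + Finsupp.single (yvar k) 1) :
    k = ⟨m-1, hm1⟩ ∧ xvar (⟨t, htn⟩ : Fin n) ⟨m-1, hm1⟩ = xvar ⟨i, hin⟩ ⟨m-1, hm1⟩ := by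
  classical
  have hkq : k = (⟨m-1, hm1⟩ : Fin n) := by
    by_contra hne
    have e1 := DFunLike.congr_fun hab (yvar k)
    rw [hβ] at e1
    simp only [Finsupp.add_apply] at e1
    rw [Finsupp.single_eq_of_ne' (xvar_ne_yvar _ _ _),
      Finsupp.single_eq_of_ne' (xvar_ne_yvar _ _ _), Finsupp.single_eq_same,
      Finsupp.single_eq_of_ne' (fun h => hne (yvar_injj h).symm)] at e1
    omega
  subst hkq
  refine ⟨rfl, ?_⟩
  by_contra hne
  have e2 := DFunLike.congr_fun hab (xvar ⟨i, hin⟩ ⟨m-1, hm1⟩)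
  rw [hβ] at e2
  simp only [Finsupp.add_apply] at e2
  rw [Finsupp.single_eq_of_ne' (fun h => xvar_ne_yvar _ _ _ h.symm),
    Finsupp.single_eq_same, Finsupp.single_eq_of_ne' hne] at e2
  omega

end NotMem

section NotMem2

variable (K : Type*) [Field K] (n : ℕ)

lemma X_mul_X_eq (s u : SymVars n) :
    (X s * X u : PolyA K n)
      = monomial (Finsupp.single s 1 + Finsupp.single u 1) 1 := by
  rw [show (X s : PolyA K n) = monomial (Finsupp.single s 1) 1 from rfl,
    show (X u : PolyA K n) = monomial (Finsupp.single u 1) 1 from rfl, monomial_mul, one_mul]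

lemma HN_not_mem {m t : ℕ} (hm : m ≤ n) (ht : t < m) :
    HN K n m t ∉ II K n m t := by
  classical
  have hm1 : m - 1 < n := by omega
  have htn : t < n := by omega
  set μ : SymVars n →₀ ℕ :=
    Finsupp.single (xvar ⟨t, htn⟩ ⟨m-1, hm1⟩) 1
      + Finsupp.single (yvar ⟨m-1, hm1⟩) 1 with hμ
  have key : ∀ (i : ℕ), i < t → ∀ a : PolyA K n,
      coeff μ (a * HN K n m i) = 0 := by
    intro i hi a
    have hin : i < n := by omega
    rw [HN_of_lt K n hin, coeff_mul]
    apply Finset.sum_eq_zero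
    rintro ⟨α, β⟩ hab
    rw [Finset.HasAntidiagonal.mem_antidiagonal] at hab
    have hβ : coeff β (HH K n m ⟨i, hin⟩) = 0 := by
      rw [HH, coeff_sum]
      apply Finset.sum_eq_zero
      intro k hk
      rw [X_mul_X_eq, coeff_monomial, if_neg]
      intro hcon
      obtain ⟨hk1, hk2⟩ := mono_analysis hm1 htn hin α β k hab hcon.symm
      have hle1 : (⟨t, htn⟩ : Fin n) ≤ ⟨m-1, hm1⟩ := by simp [Fin.le_def]; omega
      have hle2 : (⟨i, hin⟩ : Fin n) ≤ ⟨m-1, hm1⟩ := by simp [Fin.le_def]; omega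
      have := (xvar_inj hle1 hle2 hk2).1
      rw [Fin.ext_iff] at this
      simp at this
      omega
    rw [hβ, mul_zero]
  intro hmem
  have h0 : coeff μ (HN K n m t) = 0 := by
    rw [mem_II_iff] at hmem
    obtain ⟨a, ha⟩ := hmem
    rw [← ha, coeff_sum]
    apply Finset.sum_eq_zero
    intro i _
    exact key i i.2 (a i)
  have h1 : coeff μ (HN K n m t) = 1 := by
    rw [HN_of_lt K n htn, HH, coeff_sum]
    have hqmem : (⟨m-1, hm1⟩ : Fin n) ∈ univ.filter (fun k : Fin n => (k : ℕ) < m) := by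
      simp; omega
    rw [Finset.sum_eq_single_of_mem _ hqmem]
    · rw [X_mul_X_eq, coeff_monomial, if_pos rfl]
    · intro k hk hkq
      rw [X_mul_X_eq, coeff_monomial, if_neg]
      intro hcon
      exact hkq (mono_analysis hm1 htn htn 0 μ k (by rw [zero_add, hμ]) hcon.symm).1
  rw [h0] at h1
  exact one_ne_zero h1.symm

end NotMem2

section Koszul

variable (K : Type*) [Field K] (n : ℕ)

lemma kosz_zero (m : ℕ) : Kosz K n m 0 := by
  intro a _
  exact ⟨fun i _ => 0, fun i => i.elim0, fun i => i.elim0, fun i => i.elim0⟩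

lemma kosz_succ {m t : ℕ} (ih : Kosz K n m t)
    (nzd : ∀ f : PolyA K n, HN K n m t * f ∈ II K n m t → f ∈ II K n m t) :
    Kosz K n m (t + 1) := by
  intro a ha
  rw [Fin.sum_univ_castSucc] at ha
  simp only [Fin.coe_castSucc, Fin.val_last] at ha
  have hsum1 : ∑ i : Fin t, a (Fin.castSucc i) * HN K n m (i : ℕ)
      = -(a (Fin.last t) * HN K n m t) := eq_neg_of_add_eq_zero_left ha
  have hmem : HN K n m t * a (Fin.last t) ∈ II K n m t := by
    rw [mul_comm, ← neg_neg (a (Fin.last t) * HN K n m t), ← hsum1]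
    exact neg_mem (Ideal.sum_mem _ fun i _ =>
      Ideal.mul_mem_left _ _ (Ideal.subset_span ⟨i, rfl⟩))
  obtain ⟨d, hd⟩ := (mem_II_iff K n).1 (nzd _ hmem)
  set a' : Fin t → PolyA K n := fun i => a (Fin.castSucc i) + d i * HN K n m t with ha'
  have syz : ∑ i : Fin t, a' i * HN K n m (i : ℕ) = 0 := by
    have e1 : ∑ i : Fin t, a' i * HN K n m (i : ℕ)
        = (∑ i : Fin t, a (Fin.castSucc i) * HN K n m (i : ℕ))
          + (∑ i : Fin t, d i * HN K n m (i : ℕ)) * HN K n m t := by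
      rw [Finset.sum_mul, ← Finset.sum_add_distrib]
      exact Finset.sum_congr rfl fun i _ => by rw [ha']; ring
    rw [e1, hd, hsum1]
    ring
  obtain ⟨c, hc1, hc0, hc2⟩ := ih a' syz
  refine ⟨Fin.lastCases (Fin.lastCases 0 (fun j₀ => d j₀))
    (fun i₀ => Fin.lastCases (-(d i₀)) (fun j₀ => c i₀ j₀)), ?_, ?_, ?_⟩
  · intro i j
    induction i using Fin.lastCases with
    | last =>
      induction j using Fin.lastCases with
      | last => simp
      | cast j₀ => simp
    | cast i₀ =>
      induction j using Fin.lastCases with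
      | last => simp
      | cast j₀ => simp [hc1 i₀ j₀]
  · intro i
    induction i using Fin.lastCases with
    | last => simp
    | cast i₀ => simp [hc0 i₀]
  · intro i
    induction i using Fin.lastCases with
    | last =>
      rw [Fin.sum_univ_castSucc]
      simp only [Fin.lastCases_last, Fin.lastCases_castSucc, Fin.coe_castSucc,
        Fin.val_last]
      rw [zero_mul, add_zero, ← hd]
    | cast i₀ =>
      rw [Fin.sum_univ_castSucc]
      simp only [Fin.lastCases_last, Fin.lastCases_castSucc, Fin.coe_castSucc,
        Fin.val_last]
      have : a (Fin.castSucc i₀) = a' i₀ - d i₀ * HN K n m t := by rw [ha']; ring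
      rw [this, hc2 i₀]
      ring

lemma nzd_of_prime {m t : ℕ} (hp : (II K n m t).IsPrime)
    (hnm : HN K n m t ∉ II K n m t) :
    ∀ f : PolyA K n, HN K n m t * f ∈ II K n m t → f ∈ II K n m t :=
  fun _ hf => (hp.mem_or_mem hf).resolve_left hnm

end Koszul

section YReg

variable (K : Type*) [Field K] (n : ℕ)

lemma yreg {m t : ℕ} (hm : m < n) (ht : t ≤ m) (hK : Kosz K n m t) :
    ∀ f : PolyA K n,
      X (yvar ⟨m, hm⟩) * f ∈ II K n (m+1) t → f ∈ II K n (m+1) t := by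
  classical
  set q : Fin n := ⟨m, hm⟩ with hq
  set u : PolyA K n := X (yvar q) with hu
  set w : SymVars n → PolyA K n := fun s => if s = yvar q then 0 else X s with hw
  set φ : PolyA K n →+* PolyA K n := eval₂Hom MvPolynomial.C w with hφ
  have hwy : w (yvar q) = 0 := if_pos rfl
  intro f hf
  obtain ⟨a, ha⟩ := (mem_II_iff K n).1 hf
  have φH : ∀ (i : ℕ), i < t → φ (HN K n (m+1) i) = HN K n m i := by
    intro i hi
    have hin : i < n := by omega
    rw [HN_succ K n hm hin, map_add, _root_.map_mul, hφ, eval₂Hom_X', eval₂Hom_X']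
    have h2 : w (xvar ⟨i, hin⟩ q) = X (xvar ⟨i, hin⟩ q) :=
      if_neg (xvar_ne_yvar _ _ _)
    rw [hwy, h2, mul_zero, add_zero]
    rw [HN_of_lt K n hin]
    unfold HH
    rw [map_sum]
    refine Finset.sum_congr rfl fun k hk => ?_
    rw [_root_.map_mul, eval₂Hom_X', eval₂Hom_X']
    rw [show w (xvar ⟨i, hin⟩ k) = X (xvar ⟨i, hin⟩ k) from
      if_neg (xvar_ne_yvar _ _ _)]
    rw [show w (yvar k) = X (yvar k) from ?_]
    apply if_neg
    intro hcon
    have := yvar_injj hcon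
    rw [Fin.ext_iff] at this
    simp only [mem_filter, mem_univ, true_and] at hk
    simp [hq] at this
    omega
  have syz : ∑ i : Fin t, φ (a i) * HN K n m (i : ℕ) = 0 := by
    have hca := congrArg φ ha
    rw [map_sum, _root_.map_mul] at hca
    have hφu : φ u = 0 := by rw [hu, hφ, eval₂Hom_X']; exact hwy
    rw [hφu, zero_mul] at hca
    rw [← hca]
    refine Finset.sum_congr rfl fun i _ => ?_
    rw [_root_.map_mul, φH _ i.2]
  obtain ⟨c, hc1, hc0, hc2⟩ := hK (fun i => φ (a i)) syz
  have hdvd : ∀ i : Fin t, ∃ b, a i = φ (a i) + u * b := by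
    intro i
    have hmem := eval₂_sub_eval₂_mem K n (MvPolynomial.C) X w (a i)
    rw [eval₂_eta] at hmem
    have hsub : Ideal.span (Set.range fun s => X s - w s) ≤ Ideal.span {u} := by
      rw [Ideal.span_le]
      rintro _ ⟨s, rfl⟩
      dsimp only
      by_cases hs : s = yvar q
      · subst hs
        rw [hwy, sub_zero]
        exact Ideal.subset_span rfl
      · rw [show w s = X s from if_neg hs, sub_self]
        exact Ideal.zero_mem _
    have hsp := hsub hmem
    rw [Ideal.mem_span_singleton] at hsp
    obtain ⟨b, hb⟩ := hsp
    refine ⟨b, ?_⟩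
    have hb' : a i - φ (a i) = u * b := hb
    linear_combination hb'
  choose b hb using hdvd
  set xq : Fin t → PolyA K n :=
    fun j => X (xvar ⟨(j : ℕ), by omega⟩ q) with hxq
  have HNdiff : ∀ j : Fin t,
      HN K n m (j : ℕ) = HN K n (m+1) (j : ℕ) - u * xq j := by
    intro j
    rw [HN_succ K n hm (by omega : (j : ℕ) < n)]
    rw [hxq, hu, ← hq]
    ring_nf
  have point : ∀ i : Fin t,
      a i * HN K n (m+1) (i : ℕ)
        = (∑ j : Fin t, c i j * HN K n (m+1) (j : ℕ) * HN K n (m+1) (i : ℕ))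
          + u * ((b i - ∑ j : Fin t, c i j * xq j) * HN K n (m+1) (i : ℕ)) := by
    intro i
    have hφa : φ (a i)
        = (∑ j : Fin t, c i j * HN K n (m+1) (j : ℕ))
          - u * (∑ j : Fin t, c i j * xq j) := by
      rw [hc2 i, Finset.mul_sum, ← Finset.sum_sub_distrib]
      refine Finset.sum_congr rfl fun j _ => ?_
      rw [HNdiff j]
      ring
    rw [hb i, hφa,
      show (∑ j : Fin t, c i j * HN K n (m+1) (j : ℕ) * HN K n (m+1) (i : ℕ))
        = (∑ j : Fin t, c i j * HN K n (m+1) (j : ℕ)) * HN K n (m+1) (i : ℕ)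
        from (Finset.sum_mul _ _ _).symm]
    ring
  have total : u * f = u * (∑ i : Fin t,
      (b i - ∑ j : Fin t, c i j * xq j) * HN K n (m+1) (i : ℕ)) := by
    rw [← ha]
    calc ∑ i : Fin t, a i * HN K n (m+1) (i : ℕ)
        = ∑ i : Fin t, ((∑ j : Fin t, c i j * HN K n (m+1) (j : ℕ)
              * HN K n (m+1) (i : ℕ))
            + u * ((b i - ∑ j : Fin t, c i j * xq j) * HN K n (m+1) (i : ℕ))) :=
          Finset.sum_congr rfl fun i _ => point i
      _ = (∑ i : Fin t, ∑ j : Fin t, c i j * HN K n (m+1) (j : ℕ)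
              * HN K n (m+1) (i : ℕ))
            + u * ∑ i : Fin t, ((b i - ∑ j : Fin t, c i j * xq j)
              * HN K n (m+1) (i : ℕ)) := by
          rw [Finset.sum_add_distrib, Finset.mul_sum]
      _ = u * ∑ i : Fin t, ((b i - ∑ j : Fin t, c i j * xq j)
              * HN K n (m+1) (i : ℕ)) := by
          rw [antisym_sum_zero c hc1 hc0 (fun i : Fin t => HN K n (m+1) (i : ℕ)),
            zero_add]
  have hu0 : u ≠ 0 := MvPolynomial.X_ne_zero _
  have hfin := mul_left_cancel₀ hu0 total
  rw [mem_II_iff]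
  exact ⟨_, hfin.symm⟩

end YReg

section Prime

variable (K : Type*) [Field K] (n : ℕ)

set_option maxHeartbeats 2000000 in
set_option synthInstance.maxHeartbeats 1000000 in
lemma prime_succ {m t : ℕ} (hm : m < n) (ht : t ≤ m) (hK : Kosz K n m t) :
    (II K n (m+1) t).IsPrime := by
  classical
  set q : Fin n := ⟨m, hm⟩ with hq
  set u : PolyA K n := X (yvar q) with hu
  have hu0 : u ≠ 0 := MvPolynomial.X_ne_zero _
  have hle : Submonoid.powers u ≤ nonZeroDivisors (PolyA K n) :=
    powers_le_nonZeroDivisors_of_noZeroDivisors hu0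
  haveI : IsDomain (Localization.Away u) :=
    IsLocalization.isDomain_of_le_nonZeroDivisors _ hle
  set ι : PolyA K n →+* Localization.Away u :=
    algebraMap (PolyA K n) (Localization.Away u) with hι
  have hinj : Function.Injective ι := IsLocalization.injective (Localization.Away u) hle
  set v : Localization.Away u := IsLocalization.Away.invSelf u with hv
  have huv : ι u * v = 1 := IsLocalization.Away.mul_invSelf u
  have htn' : ∀ i : Fin t, (i : ℕ) < n := fun i => by omega
  set P : SymVars n → Prop :=
    fun s => ∃ i : Fin t, s = xvar ⟨(i : ℕ), htn' i⟩ q with hP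
  set w : SymVars n → Localization.Away u :=
    fun s => if h : P s then -(ι (HN K n m ((h.choose : Fin t) : ℕ)) * v)
      else ι (X s) with hw
  set ev : PolyA K n →+* Localization.Away u :=
    eval₂Hom (ι.comp MvPolynomial.C) w with hev
  -- value on remapped variables
  have w_vr : ∀ (i : ℕ) (hi : i < t) (hin : i < n),
      w (xvar ⟨i, hin⟩ q) = -(ι (HN K n m i) * v) := by
    intro i hi hin
    have hex : P (xvar ⟨i, hin⟩ q) :=
      ⟨⟨i, hi⟩, by congr 1⟩
    rw [hw]
    dsimp only
    rw [dif_pos hex]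
    have hspec := hex.choose_spec
    have hle1 : (⟨i, hin⟩ : Fin n) ≤ q := by
      simp [Fin.le_def, hq]; omega
    have hle2 : (⟨((hex.choose : Fin t) : ℕ), htn' _⟩ : Fin n) ≤ q := by
      simp [Fin.le_def, hq]; omega
    have := (xvar_inj hle1 hle2 hspec).1
    rw [Fin.ext_iff] at this
    simp only at this
    rw [← this]
  -- value on untouched variables
  have w_fix : ∀ s : SymVars n, ¬ P s → w s = ι (X s) := by
    intro s hs
    rw [hw]
    dsimp only
    rw [dif_neg hs]
  -- the variables occurring in `HN m i` (for i < t) are untouched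
  have hP_x : ∀ (i : ℕ) (hin : i < n), i < m → ∀ (k : Fin n), (k : ℕ) < m →
      ¬ P (xvar ⟨i, hin⟩ k) := by
    intro i hin him k hk hex
    obtain ⟨j, hj⟩ := hex
    have hle2 : (⟨(j : ℕ), htn' j⟩ : Fin n) ≤ q := by
      simp [Fin.le_def, hq]; omega
    -- compare the max components
    have hmax : max (⟨i, hin⟩ : Fin n) k = max (⟨(j : ℕ), htn' j⟩ : Fin n) q := by
      have := congrArg (fun z : SymVars n =>
        (Sum.elim (fun p : {p : Fin n × Fin n // p.1 ≤ p.2} => (p : Fin n × Fin n).2)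
          (fun _ => q)) z) hj
      simpa [xvar] using this
    rw [max_eq_right hle2] at hmax
    have h1 : ((max (⟨i, hin⟩ : Fin n) k : Fin n) : ℕ) = m := by
      rw [hmax, hq]
    rcases max_choice (⟨i, hin⟩ : Fin n) k with hc | hc
    · rw [hc] at h1
      simp only [Fin.val_mk] at h1
      omega
    · rw [hc] at h1
      omega
  have hP_y : ∀ k : Fin n, ¬ P (yvar k) := by
    intro k hex
    obtain ⟨j, hj⟩ := hex
    exact xvar_ne_yvar _ _ _ hj.symm
  -- ev fixes HN m i for i < t... in fact for all i < n with i < t rows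
  have ev_HNm : ∀ (i : ℕ), i < t → ev (HN K n m i) = ι (HN K n m i) := by
    intro i hi
    have hin : i < n := by omega
    rw [HN_of_lt K n hin]
    unfold HH
    rw [map_sum, map_sum]
    refine Finset.sum_congr rfl fun k hk => ?_
    simp only [mem_filter, mem_univ, true_and] at hk
    rw [ev.map_mul, ι.map_mul, hev, eval₂Hom_X', eval₂Hom_X']
    rw [w_fix _ (hP_x i hin (by omega) k hk), w_fix _ (hP_y k)]
  -- ev kills the generators
  have ev_gen : ∀ (i : ℕ), i < t → ev (HN K n (m+1) i) = 0 := by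
    intro i hi
    have hin : i < n := by omega
    rw [HN_succ K n hm hin, ev.map_add, ev.map_mul]
    rw [show ev (X (xvar ⟨i, hin⟩ q)) = w (xvar ⟨i, hin⟩ q) from eval₂Hom_X' _ _ _,
      show ev (X (yvar q)) = w (yvar q) from eval₂Hom_X' _ _ _]
    rw [w_vr i hi hin, w_fix _ (hP_y q), ev_HNm i hi]
    rw [← hu]
    have : ι (HN K n m i) + -(ι (HN K n m i) * v) * ι u
        = ι (HN K n m i) * (1 - v * ι u) := by ring
    rw [this]
    rw [show v * ι u = 1 by rw [mul_comm]; exact huv]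
    simp
  -- the kernel of ev is exactly the ideal
  have hker : II K n (m+1) t = RingHom.ker ev := by
    apply le_antisymm
    · rw [II, Ideal.span_le]
      rintro _ ⟨i, rfl⟩
      exact ev_gen (i : ℕ) i.2
    · intro f hf
      rw [RingHom.mem_ker] at hf
      -- Taylor argument
      have taylor := eval₂_sub_eval₂_mem K n (ι.comp MvPolynomial.C)
        (fun s => ι (X s)) w f
      have hid : eval₂ (ι.comp MvPolynomial.C) (fun s => ι (X s)) f = ι f := by
        have := eval₂_comp_left ι (MvPolynomial.C) X f
        rw [eval₂_eta] at this
        exact this.symm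
      rw [hid] at taylor
      have hev_f : eval₂ (ι.comp MvPolynomial.C) w f = 0 := hf
      rw [hev_f, sub_zero] at taylor
      -- the difference ideal maps into the image ideal
      have hspan : Ideal.span (Set.range fun s => ι (X s) - w s)
          ≤ Ideal.map ι (II K n (m+1) t) := by
        rw [Ideal.span_le]
        rintro _ ⟨s, rfl⟩
        dsimp only
        by_cases hs : P s
        · obtain ⟨j, rfl⟩ := hs
          rw [w_vr (j : ℕ) j.2 (htn' j), sub_neg_eq_add]
          have key : ι (X (xvar ⟨(j : ℕ), htn' j⟩ q)) + ι (HN K n m (j : ℕ)) * v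
              = ι (HN K n (m+1) (j : ℕ)) * v := by
            rw [HN_succ K n hm (htn' j), ι.map_add, ι.map_mul, add_mul,
              mul_assoc, ← hu, huv, mul_one, add_comm]
          rw [key]
          exact Ideal.mul_mem_right _ _
            (Ideal.mem_map_of_mem _ (Ideal.subset_span ⟨j, rfl⟩))
        · rw [w_fix _ hs, sub_self]
          exact Ideal.zero_mem _
      have hmem : ι f ∈ Ideal.map ι (II K n (m+1) t) := hspan taylor
      rw [hι] at hmem
      rw [IsLocalization.mem_map_algebraMap_iff (Submonoid.powers u)
        (Localization.Away u)] at hmem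
      obtain ⟨⟨p, pm⟩, hx⟩ := hmem
      obtain ⟨N, hN⟩ := pm.2
      have : ι (f * (pm : PolyA K n)) = ι (p : PolyA K n) := by
        rw [ι.map_mul]; exact hx
      have heq : f * (pm : PolyA K n) = (p : PolyA K n) := hinj this
      have hpow : u ^ N * f ∈ II K n (m+1) t := by
        rw [show u ^ N * f = f * (pm : PolyA K n) by rw [← hN]; ring, heq]
        exact p.2
      clear hx heq this hN
      induction N with
      | zero => simpa using hpow
      | succ N ih =>
        apply ih
        apply yreg K n hm ht hK
        rw [show X (yvar ⟨m, hm⟩) * (u ^ N * f) = u ^ (N + 1) * f by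
          rw [← hq, ← hu]; ring]
        exact hpow
  rw [hker]
  exact RingHom.ker_isPrime ev

end Prime

section Master

variable (K : Type*) [Field K] (n : ℕ)

lemma allKosz : ∀ m, m ≤ n → ∀ t, t ≤ m → Kosz K n m t := by
  intro m
  induction m with
  | zero =>
    intro _ t ht
    rw [Nat.le_zero] at ht
    subst ht
    exact kosz_zero K n 0
  | succ m ih =>
    intro hm1 t ht
    induction t with
    | zero => exact kosz_zero K n _
    | succ s ihs =>
      have hs : s ≤ m := by omega
      refine kosz_succ K n (ihs (by omega)) ?_
      exact nzd_of_prime K n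
        (prime_succ K n (by omega) hs (ih (by omega) s hs))
        (HN_not_mem K n (by omega) (by omega))

end Master

/-- For the generic symmetric `n × n` matrix `X` and generic column `Y`,
for every `1 ≤ t ≤ n - 1`, the ideal `⟨g_1, …, g_t⟩` is prime in `K[x_{ij} (i ≤ j), y_j]`. -/
theorem span_g_isPrime_symmetric
    (K : Type*) [Field K] (n : ℕ)
    (Xmat : Matrix (Fin n) (Fin n)
      (MvPolynomial ({p : Fin n × Fin n // p.1 ≤ p.2} ⊕ Fin n) K))
    (hX : ∀ i j, Xmat i j =
      MvPolynomial.X (Sum.inl ⟨(min i j, max i j), min_le_max⟩))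
    (g : Fin n → MvPolynomial ({p : Fin n × Fin n // p.1 ≤ p.2} ⊕ Fin n) K)
    (hg : ∀ i, g i = ∑ k, Xmat i k * MvPolynomial.X (Sum.inr k)) :
    ∀ t : ℕ, 1 ≤ t → t ≤ n - 1 →
      (Ideal.span {p | ∃ i : Fin n, (i : ℕ) < t ∧ p = g i}).IsPrime := by
  intro t ht1 ht2
  have hn2 : 2 ≤ n := by omega
  have gHN : ∀ (i : ℕ) (hin : i < n), g ⟨i, hin⟩ = HN K n n i := by
    intro i hin
    rw [hg, HN_of_lt K n hin]
    unfold HH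
    rw [show univ.filter (fun k : Fin n => (k : ℕ) < n) = univ from by
      ext k; simp [k.2]]
    refine Finset.sum_congr rfl fun k _ => ?_
    rw [hX]
    rfl
  have hset : {p | ∃ i : Fin n, (i : ℕ) < t ∧ p = g i}
      = Set.range (fun i : Fin t => HN K n n (i : ℕ)) := by
    ext p
    constructor
    · rintro ⟨i, hi, rfl⟩
      refine ⟨⟨(i : ℕ), hi⟩, ?_⟩
      show HN K n n (i : ℕ) = g i
      rw [← gHN (i : ℕ) i.2]
    · rintro ⟨i, rfl⟩
      refine ⟨⟨(i : ℕ), by omega⟩, i.2, ?_⟩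
      show (HN K n n (i : ℕ) : PolyA K n) = g ⟨(i : ℕ), by omega⟩
      exact (gHN (i : ℕ) (by omega)).symm
  rw [show Ideal.span {p | ∃ i : Fin n, (i : ℕ) < t ∧ p = g i} = II K n n t from by
    rw [II, hset]]
  have hres := prime_succ K n (show n - 1 < n by omega) ht2
    (allKosz K n (n - 1) (by omega) t ht2)
  rw [show n - 1 + 1 = n from by omega] at hres
  exact hres
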